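/- For every function ρ : List Bool → List Bool, let σ x y = true :: ρ x if x = y, and σ x y = false :: (min x y ++ max x y) if x ≠ y (min and max with respect to the shortlex order). Define f₁ : List Bool → List Bool → List Bool by: f₁ x (true :: z) = x; f₁ x (false :: z) = z.drop x.length if z.take x.length = x and x < z.drop x.length in the shortlex order, and f₁ x (false :: z) = z.take (z.length − x.length) otherwise; f₁ x [] = []. Then f₁ inverts σ with respect to the first argument: σ x (f₁ x (σ x y)) = σ x y for all x, y. -/

import Mathlib

/-- Shortlex (length-lexicographic) strict order on binary strings:
`x < y` iff `|x| < |y|`, or `|x| = |y|` and `x` lexicographically precedes `y`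
(with `false < true`). -/
def shortlexLt (x y : List Bool) : Prop :=
  x.length < y.length ∨ (x.length = y.length ∧ List.Lex (· < ·) x y)

instance : DecidableRel shortlexLt := fun x y => by
  unfold shortlexLt; infer_instance

/-- The shortlex-smaller of two binary strings. -/
def slMin (x y : List Bool) : List Bool := if shortlexLt x y then x else y

/-- The shortlex-larger of two binary strings. -/
def slMax (x y : List Bool) : List Bool := if shortlexLt x y then y else x

/-- The function of Lemma "nyyn": `σ x y = 1ρ(x)` if `x = y`, and
`σ x y = 0 ⬝ min(x,y) ⬝ max(x,y)` if `x ≠ y` (shortlex min/max). -/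
def sigmaNYYN (ρ : List Bool → List Bool) (x y : List Bool) : List Bool :=
  if x = y then true :: ρ x else false :: (slMin x y ++ slMax x y)

/-- The explicit inverter of `sigmaNYYN` with respect to the first argument. -/
def f1Inv (x : List Bool) : List Bool → List Bool
  | [] => []
  | true :: _ => x
  | false :: z =>
      if z.take x.length = x ∧ shortlexLt x (z.drop x.length) then z.drop x.length
      else z.take (z.length - x.length)

lemma shortlex_trichotomy (x y : List Bool) (h : x ≠ y) :
    shortlexLt x y ∨ shortlexLt y x := by
  rcases Nat.lt_trichotomy x.length y.length with h' | h' | h'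
  · exact Or.inl (Or.inl h')
  · rcases trichotomous_of (List.Lex (· < ·) : List Bool → List Bool → Prop) x y with h1 | h1 | h1
    · exact Or.inl (Or.inr ⟨h', h1⟩)
    · exact absurd h1 h
    · exact Or.inr (Or.inr ⟨h'.symm, h1⟩)
  · exact Or.inr (Or.inl h')

theorem stmt_6 (ρ : List Bool → List Bool) :
    ∀ x y, sigmaNYYN ρ x (f1Inv x (sigmaNYYN ρ x y)) = sigmaNYYN ρ x y := by
  intro x y
  by_cases hxy : x = y
  · simp [sigmaNYYN, hxy, f1Inv]
  · have htri : shortlexLt x y ∨ shortlexLt y x := shortlex_trichotomy x y hxy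
    suffices hf : f1Inv x (sigmaNYYN ρ x y) = y by rw [hf]
    rw [sigmaNYYN, if_neg hxy]
    by_cases h : shortlexLt x y
    · have hmin : slMin x y = x := by rw [slMin, if_pos h]
      have hmax : slMax x y = y := by rw [slMax, if_pos h]
      rw [hmin, hmax, f1Inv]
      have h1 : (x ++ y).take x.length = x := List.take_left
      have h2 : (x ++ y).drop x.length = y := List.drop_left
      rw [if_pos ⟨h1, by rw [h2]; exact h⟩, h2]
    · have hyx : shortlexLt y x := htri.resolve_left h
      have hmin : slMin x y = y := by rw [slMin, if_neg h]
      have hmax : slMax x y = x := by rw [slMax, if_neg h]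
      have hle : y.length ≤ x.length := by
        rcases hyx with h' | ⟨h', _⟩
        · exact le_of_lt h'
        · exact le_of_eq h'
      rw [hmin, hmax, f1Inv]
      have hcond : ¬((y ++ x).take x.length = x ∧
          shortlexLt x ((y ++ x).drop x.length)) := by
        rintro ⟨hc1, hc2⟩
        have hd : ((y ++ x).drop x.length).length = y.length := by
          simp [Nat.add_comm, Nat.add_sub_cancel_left,
            Nat.sub_eq_iff_eq_add hle]
        rcases hc2 with h' | ⟨h', _⟩
        · omega
        · -- x.length = y.length
          have hlen : x.length = y.length := by omega
          have : (y ++ x).take x.length = y := by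
            rw [hlen]; exact List.take_left' rfl
          exact hxy (by rw [← hc1, this])
      rw [if_neg hcond]
      have hlen2 : (y ++ x).length - x.length = y.length := by
        simp
      have htk : (y ++ x).take ((y ++ x).length - x.length) = y := by
        rw [hlen2]; exact List.take_left' rfl
      rw [htk]
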